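/- Suppose |Ψ⟩ ∈ (ℂ²)^{⊗n} and g, h are local invertible operators with G = g†g, H = h†h. If there exist probabilities p_k ≥ 0 with Σ p_k = 1, local symmetries S_k ∈ S(Ψ) (i.e., S_k|Ψ⟩ = |Ψ⟩), and r = ‖h|Ψ⟩‖²/‖g|Ψ⟩‖² such that Σ_k p_k S_k† H S_k = r G, then the operators M_k = (√p_k/√r) h S_k g^{-1} form a valid POVM (Σ_k M_k† M_k = 1) and each M_k maps g|Ψ⟩/‖g|Ψ⟩‖ to a state proportional to h|Ψ⟩/‖h|Ψ⟩‖. -/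

import Mathlib

open Matrix

/-- The matrix `M 0 ⊗ M 1 ⊗ ⋯ ⊗ M (n-1)` acting on `n` qubits,
indexed by bit strings `Fin n → Fin 2`. -/
def localMat {n : ℕ} (M : Fin n → Matrix (Fin 2) (Fin 2) ℂ) :
    Matrix (Fin n → Fin 2) (Fin n → Fin 2) ℂ :=
  Matrix.of fun f g => ∏ i, M i (f i) (g i)

/-- Squared norm `‖v‖²` of an `n`-qubit vector. -/
def nsq {n : ℕ} (v : (Fin n → Fin 2) → ℂ) : ℝ := ∑ f, Complex.normSq (v f)

/-- Gour–Wallach SEP conversion: if there are probabilities `p_k` and local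
symmetries `S_k` of `|Ψ⟩` with `Σ p_k S_k† H S_k = r G` where `H = h†h`,
`G = g†g` and `r = ‖h|Ψ⟩‖²/‖g|Ψ⟩‖²`, then the operators
`M_k = (√p_k/√r) h S_k g⁻¹` form a POVM (`Σ M_k† M_k = 1`) and each `M_k` maps
the normalized state `g|Ψ⟩/‖g|Ψ⟩‖` to a multiple of `h|Ψ⟩/‖h|Ψ⟩‖`. -/

lemma localMat_mul {n : ℕ} (M N : Fin n → Matrix (Fin 2) (Fin 2) ℂ) :
    localMat M * localMat N = localMat (fun i => M i * N i) := by
  ext f g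
  simp only [localMat, Matrix.mul_apply, Matrix.of_apply]
  rw [Finset.prod_univ_sum, Fintype.piFinset_univ]
  simp [Finset.prod_mul_distrib]

lemma localMat_one {n : ℕ} :
    localMat (fun _ : Fin n => (1 : Matrix (Fin 2) (Fin 2) ℂ)) = 1 := by
  ext f g
  simp only [localMat, Matrix.of_apply, Matrix.one_apply]
  by_cases h : f = g
  · subst h; simp
  · rw [if_neg h]
    obtain ⟨i, hi⟩ := Function.ne_iff.mp h
    exact Finset.prod_eq_zero (Finset.mem_univ i) (by simp [hi])

lemma isUnit_localMat {n : ℕ} (M : Fin n → Matrix (Fin 2) (Fin 2) ℂ)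
    (h : ∀ i, IsUnit (M i)) : IsUnit (localMat M) := by
  rw [Matrix.isUnit_iff_isUnit_det]
  have key : localMat M * localMat (fun i => (M i)⁻¹) = 1 := by
    rw [localMat_mul]
    have : (fun i => M i * (M i)⁻¹) = fun _ => (1 : Matrix (Fin 2) (Fin 2) ℂ) := by
      funext i
      exact Matrix.mul_nonsing_inv _ ((Matrix.isUnit_iff_isUnit_det _).mp (h i))
    rw [this, localMat_one]
  have := congrArg Matrix.det key
  rw [Matrix.det_mul, Matrix.det_one] at this
  exact IsUnit.of_mul_eq_one _ this

lemma nsq_pos {n : ℕ} {v : (Fin n → Fin 2) → ℂ} (hv : v ≠ 0) : 0 < nsq v := by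
  have h0 : 0 ≤ nsq v := Finset.sum_nonneg fun _ _ => Complex.normSq_nonneg _
  rcases h0.lt_or_eq with h | h
  · exact h
  · exfalso; apply hv; funext f
    have := (Finset.sum_eq_zero_iff_of_nonneg
      (fun _ _ => Complex.normSq_nonneg _)).mp h.symm f (Finset.mem_univ f)
    simpa using Complex.normSq_eq_zero.mp this

lemma mulVec_ne_zero {ι : Type*} [Fintype ι] [DecidableEq ι]
    {A : Matrix ι ι ℂ} (hA : IsUnit A) {v : ι → ℂ} (hv : v ≠ 0) : A *ᵥ v ≠ 0 := by
  intro h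
  apply hv
  have := congrArg (fun w => A⁻¹ *ᵥ w) h
  simpa [Matrix.mulVec_mulVec,
    Matrix.nonsing_inv_mul A ((Matrix.isUnit_iff_isUnit_det A).mp hA)] using this

theorem sep_conversion_povm (n m : ℕ) (Ψ : (Fin n → Fin 2) → ℂ) (hΨ : Ψ ≠ 0)
    (gf hf : Fin n → Matrix (Fin 2) (Fin 2) ℂ)
    (hgu : ∀ i, IsUnit (gf i)) (hhu : ∀ i, IsUnit (hf i))
    (Sf : Fin m → Fin n → Matrix (Fin 2) (Fin 2) ℂ)
    (hSu : ∀ k i, IsUnit (Sf k i))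
    (hSsym : ∀ k, localMat (Sf k) *ᵥ Ψ = Ψ)
    (p : Fin m → ℝ) (hp0 : ∀ k, 0 ≤ p k) (hp1 : ∑ k, p k = 1)
    (r : ℝ) (hr : r = nsq (localMat hf *ᵥ Ψ) / nsq (localMat gf *ᵥ Ψ))
    (hsep : ∑ k, (p k : ℂ) •
        ((localMat (Sf k))ᴴ * ((localMat hf)ᴴ * localMat hf) * localMat (Sf k))
      = (r : ℂ) • ((localMat gf)ᴴ * localMat gf))
    (M : Fin m → Matrix (Fin n → Fin 2) (Fin n → Fin 2) ℂ)
    (hM : ∀ k, M k = ((Real.sqrt (p k) / Real.sqrt r : ℝ) : ℂ) •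
        (localMat hf * localMat (Sf k) * (localMat gf)⁻¹)) :
    (∑ k, (M k)ᴴ * M k = 1) ∧
    ∀ k, ∃ c : ℂ,
      M k *ᵥ (((Real.sqrt (nsq (localMat gf *ᵥ Ψ)))⁻¹ : ℝ) • (localMat gf *ᵥ Ψ))
        = c • (((Real.sqrt (nsq (localMat hf *ᵥ Ψ)))⁻¹ : ℝ) • (localMat hf *ᵥ Ψ)) := by
  have hGu : IsUnit (localMat gf) := isUnit_localMat _ hgu
  have hHu : IsUnit (localMat hf) := isUnit_localMat _ hhu
  have hGdet : IsUnit (localMat gf).det := (Matrix.isUnit_iff_isUnit_det _).mp hGu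
  have hgΨ : localMat gf *ᵥ Ψ ≠ 0 := mulVec_ne_zero hGu hΨ
  have hhΨ : localMat hf *ᵥ Ψ ≠ 0 := mulVec_ne_zero hHu hΨ
  have hgpos := nsq_pos hgΨ
  have hhpos := nsq_pos hhΨ
  have hrpos : 0 < r := hr ▸ div_pos hhpos hgpos
  have hrC : (r : ℂ) ≠ 0 := by exact_mod_cast hrpos.ne'
  constructor
  · have key : ∀ k, (M k)ᴴ * M k = ((p k : ℂ) * (r : ℂ)⁻¹) •
        (((localMat gf)⁻¹)ᴴ *
          ((localMat (Sf k))ᴴ * ((localMat hf)ᴴ * localMat hf) * localMat (Sf k)) *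
          (localMat gf)⁻¹) := by
      intro k
      rw [hM k, Matrix.conjTranspose_smul]
      have hstar : star ((Real.sqrt (p k) / Real.sqrt r : ℝ) : ℂ)
          = ((Real.sqrt (p k) / Real.sqrt r : ℝ) : ℂ) := by
        simp [Complex.star_def, Complex.conj_ofReal]
      rw [hstar, Matrix.smul_mul, Matrix.mul_smul, smul_smul]
      congr 1
      · rw [← Complex.ofReal_mul, div_mul_div_comm,
          Real.mul_self_sqrt (hp0 k), Real.mul_self_sqrt hrpos.le]
        push_cast
        rw [div_eq_mul_inv]
      · simp only [Matrix.conjTranspose_mul, Matrix.mul_assoc]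
    have step : ∑ k, (M k)ᴴ * M k
        = ((localMat gf)⁻¹)ᴴ *
          (∑ k, ((p k : ℂ) * (r : ℂ)⁻¹) •
            ((localMat (Sf k))ᴴ * ((localMat hf)ᴴ * localMat hf) * localMat (Sf k))) *
          (localMat gf)⁻¹ := by
      rw [Matrix.mul_sum, Matrix.sum_mul]
      exact Finset.sum_congr rfl fun k _ => by
        rw [key k, Matrix.mul_smul, Matrix.smul_mul]
    have collect : ∑ k, ((p k : ℂ) * (r : ℂ)⁻¹) •
            ((localMat (Sf k))ᴴ * ((localMat hf)ᴴ * localMat hf) * localMat (Sf k))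
        = (r : ℂ)⁻¹ • ∑ k, (p k : ℂ) •
            ((localMat (Sf k))ᴴ * ((localMat hf)ᴴ * localMat hf) * localMat (Sf k)) := by
      rw [Finset.smul_sum]
      exact Finset.sum_congr rfl fun k _ => by rw [smul_smul, mul_comm]
    rw [step, collect, hsep, smul_smul, inv_mul_cancel₀ hrC, one_smul]
    have h1 : localMat gf * (localMat gf)⁻¹ = 1 := Matrix.mul_nonsing_inv _ hGdet
    calc ((localMat gf)⁻¹)ᴴ * ((localMat gf)ᴴ * localMat gf) * (localMat gf)⁻¹
        = (localMat gf * (localMat gf)⁻¹)ᴴ * (localMat gf * (localMat gf)⁻¹) := by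
          simp only [Matrix.conjTranspose_mul, Matrix.mul_assoc]
      _ = 1 := by rw [h1]; simp
  · intro k
    have hbC : (((Real.sqrt (nsq (localMat hf *ᵥ Ψ)))⁻¹ : ℝ) : ℂ) ≠ 0 := by
      exact_mod_cast (inv_pos.mpr (Real.sqrt_pos.mpr hhpos)).ne'
    refine ⟨((Real.sqrt (p k) / Real.sqrt r : ℝ) : ℂ) *
        (((Real.sqrt (nsq (localMat gf *ᵥ Ψ)))⁻¹ : ℝ) : ℂ) *
        ((((Real.sqrt (nsq (localMat hf *ᵥ Ψ)))⁻¹ : ℝ) : ℂ))⁻¹, ?_⟩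
    have h1 : (localMat hf * localMat (Sf k) * (localMat gf)⁻¹) *ᵥ (localMat gf *ᵥ Ψ)
        = localMat hf *ᵥ Ψ := by
      rw [Matrix.mulVec_mulVec, Matrix.mul_assoc, Matrix.nonsing_inv_mul _ hGdet,
        Matrix.mul_one, ← Matrix.mulVec_mulVec, hSsym k]
    rw [hM k, Matrix.smul_mulVec, Matrix.mulVec_smul, h1]
    funext f
    simp only [Pi.smul_apply, Complex.real_smul, smul_eq_mul]
    have hcC : ((Real.sqrt (nsq (localMat hf *ᵥ Ψ)) : ℝ) : ℂ) ≠ 0 := by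
      exact_mod_cast (Real.sqrt_pos.mpr hhpos).ne'
    rw [mul_assoc, inv_mul_cancel_left₀ hbC, mul_assoc]
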